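/- Let m be a positive integer and let a_1, ..., a_m be distinct real numbers. Define Δ̄^{1/2} ∈ S^m by (Δ̄^{1/2})_{ij} = |a_i - a_j| for i ≠ j and 0 on the diagonal, and let μ₀ be the smallest eigenvalue of -(1/2) J_m Δ̄^{1/2} J_m, where J_m = I_m - (1/m)𝟏𝟏^T. If β ≥ -4μ₀, then the symmetric matrix Δ ∈ S^m defined by Δ_{ij} = (|a_i - a_j| + β)^2 for i ≠ j and Δ_{ii} = 0 is a Euclidean distance matrix: there exist an integer s ≥ 1 and points z_1, ..., z_m ∈ ℝ^s such that ‖z_i - z_j‖^2 = Δ_{ij} for all i, j. -/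

import Mathlib

open Matrix

/-- The centering matrix `J = I - (1/k) 𝟏𝟏ᵀ`. -/
noncomputable def centeringMatrix (k : ℕ) : Matrix (Fin k) (Fin k) ℝ :=
  1 - (k : ℝ)⁻¹ • Matrix.of (fun _ _ => (1 : ℝ))

/-- The double-centered matrix `B(C) = -(1/2) J C J`. -/
noncomputable def doubleCenter {k : ℕ} (C : Matrix (Fin k) (Fin k) ℝ) :
    Matrix (Fin k) (Fin k) ℝ :=
  (-(1/2) : ℝ) • (centeringMatrix k * C * centeringMatrix k)

/-- `Δ` is a (squared) Euclidean distance matrix: there are an integer `s ≥ 1` and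
points `z_1, …, z_m ∈ ℝ^s` with `Δ i j = ‖z i - z j‖²` for all `i, j`. -/
def IsEDM {m : ℕ} (Δ : Matrix (Fin m) (Fin m) ℝ) : Prop :=
  ∃ s : ℕ, 1 ≤ s ∧ ∃ z : Fin m → EuclideanSpace ℝ (Fin s),
    ∀ i j, Δ i j = ‖z i - z j‖ ^ 2

/-- Telescoping sums over `Ico`. -/
lemma sum_Ico_telescope (f : ℕ → ℝ) :
    ∀ p q : ℕ, p ≤ q → ∑ k ∈ Finset.Ico p q, (f (k+1) - f k) = f q - f p := by
  intro p q hpq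
  induction q, hpq using Nat.le_induction with
  | base => simp
  | succ n hn ih =>
      rw [Finset.sum_Ico_succ_top hn, ih]
      ring

/-- Splitting a sum of squared differences of triple-block vectors. -/
lemma sum_sq_append3 (m : ℕ) (x y : ℝ) (u u' v v' : Fin m → ℝ) :
    ∑ k : Fin (1 + m + m),
      (Fin.append (Fin.append (fun _ : Fin 1 => x) u) v k
        - Fin.append (Fin.append (fun _ : Fin 1 => y) u') v' k)^2
      = (x - y)^2 + ∑ k : Fin m, (u k - u' k)^2 + ∑ k : Fin m, (v k - v' k)^2 := by
  rw [Fin.sum_univ_add]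
  simp only [Fin.append_left, Fin.append_right]
  rw [Fin.sum_univ_add]
  simp only [Fin.append_left, Fin.append_right]
  simp

theorem stmt2 (m : ℕ) (hm : 0 < m)
    (a : Fin m → ℝ) (ha : Function.Injective a)
    (Δhalf : Matrix (Fin m) (Fin m) ℝ)
    (hΔhalf : ∀ t u, Δhalf t u = |a t - a u|)
    (hHerm : (doubleCenter Δhalf).IsHermitian)
    (μ₀ : ℝ) (hμ₀ : μ₀ = ⨅ t, hHerm.eigenvalues t)
    (β : ℝ) (hβ : β ≥ -4 * μ₀)
    (Δ : Matrix (Fin m) (Fin m) ℝ)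
    (hΔ : ∀ t u, Δ t u = if t = u then 0 else (|a t - a u| + β) ^ 2) :
    IsEDM Δ := by
  have hmR : (m : ℝ) ≠ 0 := Nat.cast_ne_zero.mpr hm.ne'
  -- Step 1: det J = 0
  have hJdet : (centeringMatrix m).det = 0 := by
    rw [← Matrix.exists_mulVec_eq_zero_iff]
    refine ⟨fun _ => 1, ?_, ?_⟩
    · intro h
      have := congrFun h ⟨0, hm⟩
      simp at this
    · funext i
      simp [centeringMatrix, Matrix.sub_mulVec, Matrix.smul_mulVec,
        Matrix.mulVec, dotProduct, Matrix.one_apply, Finset.card_univ]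
      field_simp
      norm_num
  -- Step 2: det (doubleCenter Δhalf) = 0
  have hDdet : (doubleCenter Δhalf).det = 0 := by
    unfold doubleCenter
    rw [Matrix.det_smul, Matrix.det_mul, Matrix.det_mul, hJdet]
    ring
  -- Step 3: some eigenvalue is zero, hence μ₀ ≤ 0 and β ≥ 0
  have hμle : μ₀ ≤ 0 := by
    have hprod : ∏ t, hHerm.eigenvalues t = 0 := by
      have := hHerm.det_eq_prod_eigenvalues
      rw [hDdet] at this
      exact_mod_cast this.symm
    obtain ⟨t0, -, ht0⟩ := Finset.prod_eq_zero_iff.mp hprod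
    have : μ₀ ≤ hHerm.eigenvalues t0 := by
      rw [hμ₀]
      exact ciInf_le (Set.Finite.bddBelow (Set.finite_range _)) t0
    linarith [this, ht0.le, ht0.ge]
  have hβ0 : 0 ≤ β := by linarith
  -- Step 4: sorting
  set σ := Tuple.sort a with hσ
  set b : Fin m → ℝ := a ∘ σ with hbdef
  have hbsm : StrictMono b :=
    (Tuple.monotone_sort a).strictMono_of_injective (ha.comp σ.injective)
  have hab : ∀ i, b (σ.symm i) = a i := by
    intro i; simp [hbdef]
  -- clamped function f : ℕ → ℝ
  have hminlt : ∀ n : ℕ, min n (m - 1) < m := by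
    intro n; omega
  set f : ℕ → ℝ := fun n => b ⟨min n (m-1), hminlt n⟩ with hfdef
  have hfmono : Monotone f := by
    intro p q hpq
    exact hbsm.monotone (by simp [Fin.le_def]; omega)
  have hfi : ∀ t : Fin m, f t = b t := by
    intro t
    have heq : (⟨min (t:ℕ) (m-1), hminlt t⟩ : Fin m) = t := by
      apply Fin.ext
      have := t.isLt
      simp
      omega
    simp only [hfdef, heq]
  -- gap function
  set g : ℕ → ℝ := fun n => f (n+1) - f n with hgdef
  have hg0 : ∀ n, 0 ≤ g n := fun n => sub_nonneg.mpr (hfmono (Nat.le_succ n))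
  -- Step 5: the embedding
  set c : ℝ := β / Real.sqrt 2 with hcdef
  set u : Fin m → Fin m → ℝ := fun i k =>
    Real.sqrt (2*β*g k) * (if (k:ℕ) < ((σ.symm i : Fin m):ℕ) then 1 else 0) with hudef
  set w : Fin m → Fin m → ℝ := fun i k => if i = k then c else 0 with hwdef
  refine ⟨1 + m + m, by omega,
    fun i => WithLp.toLp 2 (Fin.append (Fin.append (fun _ : Fin 1 => a i) (u i)) (w i)), ?_⟩
  -- middle block sum lemma
  have key : ∀ p q : ℕ, p ≤ q → q ≤ m →
      ∑ k : Fin m, (Real.sqrt (2*β*g k) * (if (k:ℕ) < p then (1:ℝ) else 0)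
        - Real.sqrt (2*β*g k) * (if (k:ℕ) < q then 1 else 0))^2 = 2*β*(f q - f p) := by
    intro p q hpq hqm
    have hstep : ∀ k : ℕ, (Real.sqrt (2*β*g k) * (if k < p then (1:ℝ) else 0)
        - Real.sqrt (2*β*g k) * (if k < q then 1 else 0))^2
        = if k ∈ Finset.Ico p q then 2*β*g k else 0 := by
      intro k
      have hsq : Real.sqrt (2*β*g k) ^ 2 = 2*β*g k :=
        Real.sq_sqrt (mul_nonneg (mul_nonneg (by norm_num) hβ0) (hg0 k))
      by_cases h1 : k < p
      · have h2 : k < q := lt_of_lt_of_le h1 hpq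
        have h3 : ¬ (p ≤ k) := Nat.not_le.mpr h1
        simp [h1, h2, h3, Finset.mem_Ico]
      · by_cases h2 : k < q
        · have h3 : p ≤ k := Nat.le_of_not_lt h1
          simp only [h1, h2, if_false, if_true, Finset.mem_Ico, h3, and_true, true_and]
          linear_combination hsq
        · simp [h1, h2, Finset.mem_Ico]
    calc ∑ k : Fin m, (Real.sqrt (2*β*g k) * (if (k:ℕ) < p then (1:ℝ) else 0)
            - Real.sqrt (2*β*g k) * (if (k:ℕ) < q then 1 else 0))^2
        = ∑ k ∈ Finset.range m, if k ∈ Finset.Ico p q then 2*β*g k else 0 := by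
          rw [Fin.sum_univ_eq_sum_range (fun k => (Real.sqrt (2*β*g k) * (if k < p then (1:ℝ) else 0)
            - Real.sqrt (2*β*g k) * (if k < q then 1 else 0))^2)]
          exact Finset.sum_congr rfl (fun k _ => hstep k)
      _ = ∑ k ∈ Finset.Ico p q, 2*β*g k := by
          rw [Finset.sum_ite_mem, Finset.inter_eq_right.mpr]
          intro k hk
          simp only [Finset.mem_Ico] at hk
          exact Finset.mem_range.mpr (lt_of_lt_of_le hk.2 hqm)
      _ = 2*β*(f q - f p) := by
          rw [← Finset.mul_sum, sum_Ico_telescope f p q hpq]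
  -- middle block value
  have mid : ∀ i j : Fin m,
      ∑ k : Fin m, (u i k - u j k)^2 = 2*β*|a i - a j| := by
    intro i j
    simp only [hudef]
    rcases le_total ((σ.symm i : Fin m):ℕ) ((σ.symm j : Fin m):ℕ) with h | h
    · rw [key _ _ h (Nat.le_of_lt (σ.symm j).isLt), hfi, hfi, hab, hab]
      have : a i ≤ a j := by
        rw [← hab i, ← hab j]
        exact hbsm.monotone (Fin.le_def.mpr h)
      rw [abs_sub_comm, abs_of_nonneg (by linarith)]
    · have hsymm : ∀ k : Fin m, (Real.sqrt (2*β*g k) * (if (k:ℕ) < ((σ.symm i : Fin m):ℕ) then (1:ℝ) else 0)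
          - Real.sqrt (2*β*g k) * (if (k:ℕ) < ((σ.symm j : Fin m):ℕ) then 1 else 0))^2
          = (Real.sqrt (2*β*g k) * (if (k:ℕ) < ((σ.symm j : Fin m):ℕ) then (1:ℝ) else 0)
          - Real.sqrt (2*β*g k) * (if (k:ℕ) < ((σ.symm i : Fin m):ℕ) then 1 else 0))^2 := by
        intro k; ring
      rw [Finset.sum_congr rfl (fun k _ => hsymm k),
        key _ _ h (Nat.le_of_lt (σ.symm i).isLt), hfi, hfi, hab, hab]
      have : a j ≤ a i := by
        rw [← hab i, ← hab j]
        exact hbsm.monotone (Fin.le_def.mpr h)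
      rw [abs_of_nonneg (by linarith)]
  -- last block
  have lastblk : ∀ i j : Fin m, i ≠ j →
      ∑ k : Fin m, (w i k - w j k)^2 = β^2 := by
    intro i j hij
    simp only [hwdef]
    have hstep : ∀ k : Fin m, ((if i = k then c else 0) - (if j = k then c else 0))^2
        = (if i = k then c^2 else 0) + (if j = k then c^2 else 0) := by
      intro k
      by_cases h1 : i = k
      · have h2 : ¬ (j = k) := fun h => hij (h1.trans h.symm)
        simp only [if_pos h1, if_neg h2]
        ring
      · by_cases h2 : j = k
        · simp only [if_neg h1, if_pos h2]
          ring
        · simp only [if_neg h1, if_neg h2]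
          ring
    rw [Finset.sum_congr rfl (fun k _ => hstep k), Finset.sum_add_distrib,
      Finset.sum_ite_eq, Finset.sum_ite_eq]
    have h2 : Real.sqrt 2 ^ 2 = 2 := Real.sq_sqrt (by norm_num)
    simp only [Finset.mem_univ, if_true, hcdef, div_pow, h2]
    ring
  -- norm computation
  have hnrm : ∀ (x y : EuclideanSpace ℝ (Fin (1+m+m))),
      ‖x - y‖^2 = ∑ k, (x k - y k)^2 := by
    intro x y
    rw [EuclideanSpace.norm_eq, Real.sq_sqrt (by positivity)]
    apply Finset.sum_congr rfl
    intro k _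
    rw [PiLp.sub_apply, Real.norm_eq_abs, sq_abs]
  -- final computation
  intro i j
  rw [hnrm, hΔ]
  by_cases hij : i = j
  · subst hij
    simp
  · rw [if_neg hij]
    simp only [PiLp.toLp_apply]
    rw [sum_sq_append3 m (a i) (a j) (u i) (u j) (w i) (w j),
      mid i j, lastblk i j hij]
    nlinarith [sq_abs (a i - a j)]
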